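/- arXiv:1303.5305 — 5 statements merged into one kernel-verified Lean document; each statement's English description precedes it below -/
import Mathlib

section
/- Let p > 1 be real, and let z ∈ ℝ^n be a vector with at least two nonzero components, and let i be an index with z_i > 0. Then there exists λ ∈ ℝ such that ‖e_i - λ z‖_p^p < 1. -/
theorem exists_scaling_lt_one {n : ℕ} (p : ℝ) (hp : 1 < p) (z : Fin n → ℝ)
    (htwo : ∃ j k : Fin n, j ≠ k ∧ z j ≠ 0 ∧ z k ≠ 0) (i : Fin n) (hzi : 0 < z i) :
    ∃ lam : ℝ, ∑ j, |(Pi.single i (1 : ℝ) : Fin n → ℝ) j - lam * z j| ^ p < 1 := by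
  classical
  set C : ℝ := ∑ j ∈ Finset.univ.erase i, |z j| ^ p with hC
  have hCnonneg : 0 ≤ C := Finset.sum_nonneg fun j _ =>
    Real.rpow_nonneg (abs_nonneg _) p
  have hCpos : 0 < C := by
    obtain ⟨j, k, hjk, hzj, hzk⟩ := htwo
    set m : Fin n := if j = i then k else j with hm
    have hmi : m ≠ i := by
      by_cases h : j = i
      · simp [hm, h]; exact fun hk => hjk (h.trans hk.symm)
      · simpa [hm, h] using h
    have hzm : z m ≠ 0 := by
      by_cases h : j = i <;> simp [hm, h, hzj, hzk]
    have hmem : m ∈ Finset.univ.erase i := Finset.mem_erase.mpr ⟨hmi, Finset.mem_univ m⟩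
    have : 0 < |z m| ^ p := Real.rpow_pos_of_pos (abs_pos.mpr hzm) p
    exact lt_of_lt_of_le this (Finset.single_le_sum
      (fun j _ => Real.rpow_nonneg (abs_nonneg _) p) hmem)
  have hp1 : (0:ℝ) < p - 1 := by linarith
  set b : ℝ := (z i / (2 * C)) ^ (1 / (p - 1)) with hb
  have hxpos : 0 < z i / (2 * C) := div_pos hzi (by linarith)
  have hbpos : 0 < b := Real.rpow_pos_of_pos hxpos _
  set lam : ℝ := min (1 / (2 * z i)) b with hlam
  have hlampos : 0 < lam := lt_min (by positivity) hbpos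
  have hlamzi : lam * z i ≤ 1 / 2 := by
    have h1 : lam ≤ 1 / (2 * z i) := min_le_left _ _
    calc lam * z i ≤ (1 / (2 * z i)) * z i := by
          exact mul_le_mul_of_nonneg_right h1 hzi.le
      _ = 1 / 2 := by field_simp
  have hkey : lam ^ (p - 1) ≤ z i / (2 * C) := by
    have h1 : lam ≤ b := min_le_right _ _
    have h2 : lam ^ (p - 1) ≤ b ^ (p - 1) :=
      Real.rpow_le_rpow hlampos.le h1 hp1.le
    have h3 : b ^ (p - 1) = z i / (2 * C) := by
      rw [hb, ← Real.rpow_mul hxpos.le, one_div_mul_cancel (ne_of_gt hp1), Real.rpow_one]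
    rwa [h3] at h2
  refine ⟨lam, ?_⟩
  rw [← Finset.add_sum_erase _ _ (Finset.mem_univ i)]
  have hterm_i : |(Pi.single i (1:ℝ) : Fin n → ℝ) i - lam * z i| ^ p ≤ 1 - lam * z i := by
    have h0 : (0:ℝ) < 1 - lam * z i := by linarith
    have h1 : 1 - lam * z i ≤ 1 := by nlinarith [mul_pos hlampos hzi]
    rw [Pi.single_eq_same, abs_of_pos h0]
    calc (1 - lam * z i) ^ p ≤ (1 - lam * z i) ^ (1:ℝ) :=
          Real.rpow_le_rpow_of_exponent_ge h0 h1 hp.le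
      _ = 1 - lam * z i := Real.rpow_one _
  have hterm_rest : ∑ j ∈ Finset.univ.erase i,
      |(Pi.single i (1:ℝ) : Fin n → ℝ) j - lam * z j| ^ p = lam ^ p * C := by
    rw [hC, Finset.mul_sum]
    apply Finset.sum_congr rfl
    intro j hj
    have hji : j ≠ i := (Finset.mem_erase.mp hj).1
    rw [Pi.single_eq_of_ne hji, zero_sub, abs_neg, abs_mul, abs_of_pos hlampos,
      Real.mul_rpow hlampos.le (abs_nonneg _)]
  rw [hterm_rest]
  have hrest : lam ^ p * C < lam * z i := by
    have hsplit : lam ^ p = lam * lam ^ (p - 1) := by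
      rw [← Real.rpow_one_add' (by positivity) (by linarith)]
      ring_nf
    calc lam ^ p * C = lam * lam ^ (p - 1) * C := by rw [hsplit]
      _ ≤ lam * (z i / (2 * C)) * C := by
          apply mul_le_mul_of_nonneg_right _ hCnonneg
          exact mul_le_mul_of_nonneg_left hkey hlampos.le
      _ = lam * z i / 2 := by field_simp
      _ < lam * z i := by
          have := mul_pos hlampos hzi; linarith
  linarith
end

section
/- Let z ∈ ℝ^n be a nonzero vector and p > 1 real. Then there exist an index i and a scalar λ ∈ ℝ such that ‖e_i - λ z‖_p^p < 1. -/
theorem exists_unit_vector_close {n : ℕ} (p : ℝ) (hp : 1 < p) (z : Fin n → ℝ) (hz : z ≠ 0) :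
    ∃ (i : Fin n) (lam : ℝ), ∑ j, |(Pi.single i (1 : ℝ) : Fin n → ℝ) j - lam * z j| ^ p < 1 := by
  obtain ⟨i, hi⟩ := Function.ne_iff.mp hz
  simp only [Pi.zero_apply] at hi
  set C : ℝ := ∑ j ∈ Finset.univ.erase i, (|z j| / |z i|) ^ p with hC
  have hCnn : 0 ≤ C := Finset.sum_nonneg fun j _ => Real.rpow_nonneg (by positivity) p
  have hp1 : (0:ℝ) < p - 1 := by linarith
  set a : ℝ := (1 / (C + 1)) ^ (1 / (p - 1)) with ha
  have hapos : 0 < a := Real.rpow_pos_of_pos (by positivity) _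
  set t : ℝ := min (1/2) a with ht
  have htpos : 0 < t := lt_min (by norm_num) hapos
  have hthalf : t ≤ 1/2 := min_le_left _ _
  have ht1 : t < 1 := by linarith
  have hkey : C * t ^ (p - 1) < 1 := by
    have h1 : t ^ (p - 1) ≤ a ^ (p - 1) :=
      Real.rpow_le_rpow htpos.le (min_le_right _ _) hp1.le
    have h2 : a ^ (p - 1) = 1 / (C + 1) := by
      rw [ha, ← Real.rpow_mul (by positivity), one_div (p-1),
        inv_mul_cancel₀ hp1.ne', Real.rpow_one]
    calc C * t ^ (p - 1) ≤ C * (1 / (C + 1)) :=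
          mul_le_mul_of_nonneg_left (h1.trans_eq h2) hCnn
      _ < 1 := by
          rw [mul_one_div, div_lt_one (by positivity)]; linarith
  refine ⟨i, t / z i, ?_⟩
  rw [← Finset.add_sum_erase _ _ (Finset.mem_univ i)]
  have e1 : |(Pi.single i (1:ℝ) : Fin n → ℝ) i - t / z i * z i| ^ p = (1 - t) ^ p := by
    rw [Pi.single_eq_same, div_mul_cancel₀ _ hi, abs_of_nonneg (by linarith)]
  have e2 : ∑ j ∈ Finset.univ.erase i, |(Pi.single i (1:ℝ) : Fin n → ℝ) j - t / z i * z j| ^ p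
      = t ^ p * C := by
    rw [hC, Finset.mul_sum]
    refine Finset.sum_congr rfl fun j hj => ?_
    rw [Pi.single_eq_of_ne (Finset.ne_of_mem_erase hj), zero_sub, abs_neg,
      ← Real.mul_rpow htpos.le (by positivity)]
    congr 1
    rw [abs_mul, abs_div, abs_of_pos htpos]
    ring
  rw [e1, e2]
  have b1 : (1 - t) ^ p ≤ 1 - t := by
    have h0 : (0:ℝ) < 1 - t := by linarith
    calc (1 - t) ^ p ≤ (1 - t) ^ (1:ℝ) :=
          Real.rpow_le_rpow_of_exponent_ge h0 (by linarith) hp.le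
      _ = 1 - t := Real.rpow_one _
  have b2 : t ^ p * C = t * (C * t ^ (p - 1)) := by
    have : t ^ p = t * t ^ (p - 1) := by
      rw [← Real.rpow_one_add' htpos.le (by linarith)]
      ring_nf
    rw [this]; ring
  have b3 : t * (C * t ^ (p - 1)) < t * 1 := by
    exact mul_lt_mul_of_pos_left hkey htpos
  calc (1 - t) ^ p + t ^ p * C ≤ (1 - t) + t * (C * t ^ (p - 1)) := by
        rw [b2]; linarith
    _ < (1 - t) + t * 1 := by linarith
    _ = 1 := by ring
end

section
/- Let n ≥ 2, let 𝟙 ∈ ℝ^n be the all-ones vector, and let 0 < p ≤ 1. Then for every index i and every λ ∈ ℝ, ‖e_i - λ𝟙‖_p^p = |1-λ|^p + (n-1)|λ|^p ≥ 1. -/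
private lemma rpow_subadd {p : ℝ} (hp : 0 ≤ p) (hp1 : p ≤ 1) {a b : ℝ}
    (ha : 0 ≤ a) (hb : 0 ≤ b) : (a + b) ^ p ≤ a ^ p + b ^ p := by
  have := NNReal.rpow_add_le_add_rpow (⟨a, ha⟩ : NNReal) (⟨b, hb⟩ : NNReal) hp hp1
  have h2 := (NNReal.coe_le_coe).2 this
  push_cast at h2
  exact h2

theorem all_ones_counterexample {n : ℕ} (hn : 2 ≤ n) (p : ℝ) (hp0 : 0 < p) (hp1 : p ≤ 1)
    (i : Fin n) (lam : ℝ) :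
    (∑ j, |(Pi.single i (1 : ℝ) : Fin n → ℝ) j - lam * 1| ^ p = |1 - lam| ^ p + (n - 1 : ℝ) * |lam| ^ p) ∧
      1 ≤ |1 - lam| ^ p + (n - 1 : ℝ) * |lam| ^ p := by
  constructor
  · rw [Finset.sum_eq_add_sum_sdiff_singleton_of_mem (Finset.mem_univ i)
      (fun j => |(Pi.single i (1 : ℝ) : Fin n → ℝ) j - lam * 1| ^ p)]
    have h2 : ∀ j ∈ Finset.univ \ {i},
        |(Pi.single i (1 : ℝ) : Fin n → ℝ) j - lam * 1| ^ p = |lam| ^ p := by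
      intro j hj
      simp only [Finset.mem_sdiff, Finset.mem_singleton, Finset.mem_univ, true_and] at hj
      rw [Pi.single_eq_of_ne hj]
      rw [show (0 : ℝ) - lam * 1 = -lam by ring, abs_neg]
    rw [Finset.sum_congr rfl h2, Finset.sum_const]
    have hcard : (Finset.univ \ {i} : Finset (Fin n)).card = n - 1 := by
      simp [Finset.card_sdiff_of_subset]
    rw [hcard, nsmul_eq_mul, Nat.cast_sub (by omega), Nat.cast_one]
    norm_num
  · have habs : (1 : ℝ) ≤ |1 - lam| + |lam| := by
      calc (1 : ℝ) = |1 - lam + lam| := by norm_num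
      _ ≤ |1 - lam| + |lam| := abs_add_le _ _
    have h1 : (1 : ℝ) ≤ (|1 - lam| + |lam|) ^ p := by
      calc (1 : ℝ) = (1 : ℝ) ^ p := (Real.one_rpow p).symm
      _ ≤ _ := Real.rpow_le_rpow (by norm_num) habs hp0.le
    have h2 := rpow_subadd hp0.le hp1 (abs_nonneg (1 - lam)) (abs_nonneg lam)
    have h3 : |lam| ^ p ≤ (n - 1 : ℝ) * |lam| ^ p := by
      have hn' : (2:ℝ) ≤ n := by exact_mod_cast hn
      have hx : 0 ≤ |lam| ^ p := Real.rpow_nonneg (abs_nonneg lam) p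
      nlinarith
    linarith
end

section
/- Let A ∈ ℝ^{r×n} and K ∈ ℕ. Define f_i = inf{‖e_i - z‖_2^2 : ‖Az‖_0 ≤ K} for i = 1,…,n and f = min_i f_i. Then f < 1 if and only if there exists a nonzero z ∈ ℝ^n with ‖Az‖_0 ≤ K (i.e., z violates at most K of the equations Az = 0). -/
/-- number of nonzero entries of a vector -/
noncomputable def l0 {m : ℕ} (v : Fin m → ℝ) : ℕ := (Finset.univ.filter (fun j => v j ≠ 0)).card

lemma l0_smul_le {m : ℕ} (c : ℝ) (v : Fin m → ℝ) : l0 (c • v) ≤ l0 v := by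
  unfold l0
  apply Finset.card_le_card
  intro j hj
  simp only [Finset.mem_filter, Pi.smul_apply, smul_eq_mul] at *
  exact ⟨hj.1, right_ne_zero_of_mul hj.2⟩

lemma single_sq_sum {n : ℕ} (i : Fin n) :
    ∑ j, ((Pi.single i (1 : ℝ) : Fin n → ℝ) j) ^ 2 = 1 := by
  rw [Finset.sum_eq_single i]
  · simp
  · intro b _ hb; rw [Pi.single_eq_of_ne hb]; ring
  · intro h; exact absurd (Finset.mem_univ i) h

theorem reduction_equivalence {r n : ℕ} (A : Matrix (Fin r) (Fin n) ℝ) (K : ℕ) :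
    (∃ i : Fin n,
        sInf {t : ℝ | ∃ z : Fin n → ℝ, l0 (A.mulVec z) ≤ K ∧
          t = ∑ j, ((Pi.single i (1 : ℝ) : Fin n → ℝ) j - z j) ^ 2} < 1)
      ↔ ∃ z : Fin n → ℝ, z ≠ 0 ∧ l0 (A.mulVec z) ≤ K := by
  have hzero : ∀ i : Fin n, (1 : ℝ) ∈ {t : ℝ | ∃ z : Fin n → ℝ, l0 (A.mulVec z) ≤ K ∧
      t = ∑ j, ((Pi.single i (1 : ℝ) : Fin n → ℝ) j - z j) ^ 2} := by
    intro i
    refine ⟨0, ?_, ?_⟩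
    · simp [l0, Matrix.mulVec_zero]
    · simp only [Pi.zero_apply, sub_zero]
      exact (single_sq_sum i).symm
  constructor
  · rintro ⟨i, hi⟩
    obtain ⟨t, ⟨z, hzK, ht⟩, htlt⟩ := exists_lt_of_csInf_lt ⟨1, hzero i⟩ hi
    refine ⟨z, ?_, hzK⟩
    intro hz0
    rw [ht, hz0] at htlt
    simp only [Pi.zero_apply, sub_zero] at htlt
    rw [single_sq_sum i] at htlt
    exact lt_irrefl 1 htlt
  · rintro ⟨z, hz, hzK⟩
    obtain ⟨i, hzi⟩ : ∃ i, z i ≠ 0 := by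
      by_contra h
      push_neg at h
      exact hz (funext h)
    refine ⟨i, ?_⟩
    set S : ℝ := ∑ j, z j ^ 2 with hS
    have hSpos : 0 < S := by
      apply Finset.sum_pos'
      · intro j _; positivity
      · exact ⟨i, Finset.mem_univ i, by positivity⟩
    set c : ℝ := z i / S with hc
    have hbdd : BddBelow {t : ℝ | ∃ z : Fin n → ℝ, l0 (A.mulVec z) ≤ K ∧
        t = ∑ j, ((Pi.single i (1 : ℝ) : Fin n → ℝ) j - z j) ^ 2} := by
      refine ⟨0, ?_⟩
      rintro t ⟨w, _, rfl⟩
      positivity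
    have hmem : (1 - (z i)^2 / S) ∈ {t : ℝ | ∃ z : Fin n → ℝ, l0 (A.mulVec z) ≤ K ∧
        t = ∑ j, ((Pi.single i (1 : ℝ) : Fin n → ℝ) j - z j) ^ 2} := by
      refine ⟨c • z, ?_, ?_⟩
      · rw [Matrix.mulVec_smul]
        exact le_trans (l0_smul_le c _) hzK
      · have expand : ∀ j, ((Pi.single i (1 : ℝ) : Fin n → ℝ) j - (c • z) j) ^ 2 =
            ((Pi.single i (1 : ℝ) : Fin n → ℝ) j) ^ 2
              - 2 * c * ((Pi.single i (1 : ℝ) : Fin n → ℝ) j * z j) + c ^ 2 * z j ^ 2 := by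
          intro j; simp only [Pi.smul_apply, smul_eq_mul]; ring
        rw [Finset.sum_congr rfl (fun j _ => expand j)]
        rw [Finset.sum_add_distrib, Finset.sum_sub_distrib, single_sq_sum i,
          ← Finset.mul_sum, ← Finset.mul_sum]
        have hsingle : ∑ j, (Pi.single i (1 : ℝ) : Fin n → ℝ) j * z j = z i := by
          rw [Finset.sum_eq_single i]
          · simp
          · intro b _ hb; rw [Pi.single_eq_of_ne hb]; ring
          · intro h; exact absurd (Finset.mem_univ i) h
        rw [hsingle, ← hS, hc]
        field_simp
        ring
    calc sInf _ ≤ 1 - (z i)^2 / S := csInf_le hbdd hmem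
    _ < 1 := by
      have : 0 < (z i)^2 / S := by positivity
      linarith
end

section
/- Let p > 1 be real, z ∈ ℝ^n with z_i > 0 and α := ‖z‖_p^p − |z_i|^p > 0. Then for all λ with 0 < λ ≤ 1/z_i, ‖e_i − λz‖_p^p ≤ 1 + λ^p α − λ z_i, and there exists λ in this range making the right-hand side strictly less than 1. -/
theorem key_estimate {n : ℕ} (p : ℝ) (hp : 1 < p) (z : Fin n → ℝ) (i : Fin n)
    (hzi : 0 < z i) (α : ℝ) (hα : α = (∑ j, |z j| ^ p) - |z i| ^ p) (hαpos : 0 < α) :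
    (∀ lam : ℝ, 0 < lam → lam ≤ 1 / z i →
        ∑ j, |(Pi.single i (1 : ℝ) : Fin n → ℝ) j - lam * z j| ^ p ≤ 1 + lam ^ p * α - lam * z i) ∧
      ∃ lam : ℝ, 0 < lam ∧ lam ≤ 1 / z i ∧ 1 + lam ^ p * α - lam * z i < 1 := by
  constructor
  · intro lam hl0 hl1
    have hlz : lam * z i ≤ 1 := by
      exact (le_div_iff₀ hzi).mp hl1
    have hcompl : ∑ j ∈ {i}ᶜ, |z j| ^ p = α := by
      have := Fintype.sum_eq_add_sum_compl i (fun j => |z j| ^ p)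
      rw [hα]
      linarith [this]
    have key : ∑ j, |(Pi.single i (1 : ℝ) : Fin n → ℝ) j - lam * z j| ^ p
        = |1 - lam * z i| ^ p + lam ^ p * α := by
      rw [Fintype.sum_eq_add_sum_compl i]
      congr 1
      · rw [Pi.single_eq_same]
      · rw [← hcompl, Finset.mul_sum]
        apply Finset.sum_congr rfl
        intro j hj
        have hji : j ≠ i := by simpa using hj
        rw [Pi.single_eq_of_ne hji, zero_sub, abs_neg, abs_mul, abs_of_pos hl0,
          Real.mul_rpow hl0.le (abs_nonneg _)]
    rw [key]
    have h1 : |1 - lam * z i| ^ p ≤ 1 - lam * z i := by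
      have h0 : 0 ≤ 1 - lam * z i := by linarith
      rw [abs_of_nonneg h0]
      rcases eq_or_lt_of_le h0 with h | h
      · rw [← h, Real.zero_rpow (by linarith)]
      · calc (1 - lam * z i) ^ p ≤ (1 - lam * z i) ^ (1 : ℝ) :=
              Real.rpow_le_rpow_of_exponent_ge h (by nlinarith [mul_pos hl0 hzi]) hp.le
          _ = 1 - lam * z i := Real.rpow_one _
    linarith
  · set c : ℝ := (z i / (2 * α)) ^ (1 / (p - 1)) with hc
    have hbase : 0 < z i / (2 * α) := div_pos hzi (by linarith)
    have hcpos : 0 < c := Real.rpow_pos_of_pos hbase _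
    refine ⟨min (1 / z i) c, lt_min (by positivity) hcpos, min_le_left _ _, ?_⟩
    set lam := min (1 / z i) c with hlam
    have hl0 : 0 < lam := lt_min (by positivity) hcpos
    have hp1 : (0:ℝ) < p - 1 := by linarith
    have hle : lam ^ (p - 1) ≤ z i / (2 * α) := by
      calc lam ^ (p - 1) ≤ c ^ (p - 1) :=
            Real.rpow_le_rpow hl0.le (min_le_right _ _) hp1.le
        _ = z i / (2 * α) := by
            rw [hc, ← Real.rpow_mul hbase.le, one_div,
              inv_mul_cancel₀ (ne_of_gt hp1), Real.rpow_one]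
    have hsplit : lam ^ p = lam * lam ^ (p - 1) := by
      rw [show p = 1 + (p - 1) by ring, Real.rpow_add hl0, Real.rpow_one]
      ring_nf
    have : lam ^ p * α ≤ lam * (z i / (2 * α)) * α := by
      rw [hsplit]
      have := mul_le_mul_of_nonneg_left hle hl0.le
      nlinarith
    have h2 : lam * (z i / (2 * α)) * α = lam * z i / 2 := by
      field_simp
    nlinarith [mul_pos hl0 hzi]
end
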